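/- (Mező's dual of Spivey's formula.) For all natural numbers n, m: (n+m)! = Σ_{r=0}^{n} Σ_{j=0}^{m} c(m,j) · m^{(n−r)↑} · C(n,r) · r!, where m^{b↑} = m(m+1)⋯(m+b−1) denotes the rising factorial (with m^{0↑} = 1) and C(n,r) is the ordinary binomial coefficient. -/
import Mathlib


/-- The unsigned Stirling numbers of the first kind `c(n,k)`. -/
def stirling1 : ℕ → ℕ → ℕ
  | 0, 0 => 1
  | 0, _ + 1 => 0
  | _ + 1, 0 => 0
  | n + 1, k + 1 =>
    if k + 1 ≤ n + 1 then stirling1 n k + n * stirling1 n (k + 1) else 0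

lemma stirling1_eq_zero_of_lt : ∀ n k : ℕ, n < k → stirling1 n k = 0
  | 0, _ + 1, _ => rfl
  | n + 1, k + 1, h => by
    rw [stirling1, if_neg (by omega)]

lemma mul_stirling1_zero (m : ℕ) : m * stirling1 m 0 = 0 := by
  cases m with
  | zero => rfl
  | succ m => rw [show stirling1 (m + 1) 0 = 0 from rfl, mul_zero]

lemma sum_stirling1 (m : ℕ) :
    ∑ j ∈ Finset.range (m + 1), stirling1 m j = m.factorial := by
  induction m with
  | zero => simp [stirling1]
  | succ m ih =>
    rw [Finset.sum_range_succ']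
    have h0 : stirling1 (m + 1) 0 = 0 := rfl
    have hstep : ∀ j ∈ Finset.range (m + 1),
        stirling1 (m + 1) (j + 1) = stirling1 m j + m * stirling1 m (j + 1) := by
      intro j hj
      rw [Finset.mem_range] at hj
      rw [stirling1, if_pos (by omega)]
    rw [h0, add_zero, Finset.sum_congr rfl hstep, Finset.sum_add_distrib,
      ← Finset.mul_sum, ih]
    have h1 : ∑ j ∈ Finset.range (m + 1), stirling1 m (j + 1)
        = ∑ j ∈ Finset.range m, stirling1 m (j + 1) := by
      rw [Finset.sum_range_succ, stirling1_eq_zero_of_lt m (m + 1) (by omega), add_zero]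
    have h2 : m * ∑ j ∈ Finset.range (m + 1), stirling1 m (j + 1) = m * m.factorial := by
      rw [h1]
      have h3 : m.factorial = stirling1 m 0 + ∑ j ∈ Finset.range m, stirling1 m (j + 1) := by
        rw [← ih, Finset.sum_range_succ']; ring
      rw [h3, mul_add, mul_stirling1_zero, zero_add]
    rw [h2, Nat.factorial_succ]
    ring

lemma rising_sum (m : ℕ) : ∀ n : ℕ,
    ∏ i ∈ Finset.range n, (m + 1 + i)
      = ∑ r ∈ Finset.range (n + 1),
          n.choose r * r.factorial * ∏ i ∈ Finset.range (n - r), (m + i) := by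
  intro n
  induction n with
  | zero => simp
  | succ n ih =>
    rw [Finset.prod_range_succ, ih, Finset.sum_range_succ' _ (n + 1)]
    have hg0 : (n + 1).choose 0 * Nat.factorial 0 * ∏ i ∈ Finset.range (n + 1 - 0), (m + i)
        = ∏ i ∈ Finset.range (n + 1), (m + i) := by simp
    rw [hg0]
    have hsplit : ∀ r ∈ Finset.range (n + 1),
        (n + 1).choose (r + 1) * (r + 1).factorial
            * ∏ i ∈ Finset.range (n + 1 - (r + 1)), (m + i)
        = n.choose r * (r + 1).factorial * ∏ i ∈ Finset.range (n - r), (m + i)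
          + n.choose (r + 1) * (r + 1).factorial * ∏ i ∈ Finset.range (n - r), (m + i) := by
      intro r hr
      rw [Finset.mem_range] at hr
      rw [Nat.choose_succ_succ, show n + 1 - (r + 1) = n - r by omega]
      ring
    rw [Finset.sum_congr rfl hsplit, Finset.sum_add_distrib]
    -- handle the second sum: shift index
    have hsum2 : (∑ r ∈ Finset.range (n + 1),
          n.choose (r + 1) * (r + 1).factorial * ∏ i ∈ Finset.range (n - r), (m + i))
          + ∏ i ∈ Finset.range (n + 1), (m + i)
        = ∑ r ∈ Finset.range (n + 1),
            n.choose r * r.factorial * ∏ i ∈ Finset.range (n + 1 - r), (m + i) := by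
      rw [Finset.sum_range_succ' (fun r =>
        n.choose r * r.factorial * ∏ i ∈ Finset.range (n + 1 - r), (m + i)) n]
      have hlast : ∑ r ∈ Finset.range (n + 1),
            n.choose (r + 1) * (r + 1).factorial * ∏ i ∈ Finset.range (n - r), (m + i)
          = ∑ r ∈ Finset.range n,
            n.choose (r + 1) * (r + 1).factorial * ∏ i ∈ Finset.range (n - r), (m + i) := by
        rw [Finset.sum_range_succ, Nat.choose_succ_self, zero_mul, zero_mul, add_zero]
      rw [hlast]
      congr 1
      · apply Finset.sum_congr rfl
        intro r hr
        rw [Finset.mem_range] at hr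
        rw [show n + 1 - (r + 1) = n - r by omega]
      · simp
    conv_rhs => rw [add_assoc, hsum2]
    have hmerge : ∀ r ∈ Finset.range (n + 1),
        n.choose r * r.factorial * ∏ i ∈ Finset.range (n + 1 - r), (m + i)
        = n.choose r * r.factorial * (∏ i ∈ Finset.range (n - r), (m + i)) * (m + (n - r)) := by
      intro r hr
      rw [Finset.mem_range] at hr
      rw [show n + 1 - r = (n - r) + 1 by omega, Finset.prod_range_succ]
      ring
    rw [Finset.sum_congr rfl hmerge, ← Finset.sum_add_distrib, Finset.sum_mul]
    apply Finset.sum_congr rfl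
    intro r hr
    rw [Finset.mem_range] at hr
    have hfac : (r + 1).factorial = r.factorial * (r + 1) := by
      rw [Nat.factorial_succ]; ring
    rw [hfac]
    rw [show m + 1 + n = m + (n - r) + (r + 1) by omega]
    ring

lemma factorial_mul_rising (m : ℕ) : ∀ n : ℕ,
    (n + m).factorial = m.factorial * ∏ i ∈ Finset.range n, (m + 1 + i) := by
  intro n
  induction n with
  | zero => simp
  | succ n ih =>
    rw [Finset.prod_range_succ, ← mul_assoc, ← ih,
      show n + 1 + m = (n + m) + 1 by omega, Nat.factorial_succ]
    ring

/-- Mező's dual of Spivey's formula: `(n+m)! = Σ_r Σ_j c(m,j)·m^{(n-r)↑}·C(n,r)·r!`,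
where `m^{b↑} = m(m+1)⋯(m+b-1)` is the rising factorial. -/
theorem mezo_dual_spivey (n m : ℕ) :
    (n + m).factorial
    = ∑ r ∈ Finset.range (n + 1), ∑ j ∈ Finset.range (m + 1),
        stirling1 m j * (∏ i ∈ Finset.range (n - r), (m + i)) * n.choose r * r.factorial := by
  have hinner : ∀ r : ℕ,
      (∑ j ∈ Finset.range (m + 1),
        stirling1 m j * (∏ i ∈ Finset.range (n - r), (m + i)) * n.choose r * r.factorial)
      = m.factorial * (n.choose r * r.factorial * ∏ i ∈ Finset.range (n - r), (m + i)) := by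
    intro r
    rw [← sum_stirling1 m, Finset.sum_mul]
    apply Finset.sum_congr rfl
    intro j _
    ring
  calc (n + m).factorial
      = m.factorial * ∏ i ∈ Finset.range n, (m + 1 + i) := factorial_mul_rising m n
    _ = m.factorial * ∑ r ∈ Finset.range (n + 1),
          n.choose r * r.factorial * ∏ i ∈ Finset.range (n - r), (m + i) := by
        rw [rising_sum]
    _ = _ := by
        rw [Finset.mul_sum]
        exact (Finset.sum_congr rfl fun r _ => (hinner r).symm)
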